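/- Let m ≥ 1, let ε ∈ (0, 1], let δ ∈ (0, 1) be such that c = √(2 ln(1.25/δ)) satisfies c ≥ 3/2, and let Ψ be a set of pairs of multivariate Gaussian probability measures on ℝ^m of the form (N(μᵢ, Σ₀), N(μⱼ, Σ₀)) with a common symmetric positive definite covariance matrix Σ₀ for each pair. Let Σ be a symmetric positive semidefinite matrix and let ζ = N(0, Σ) be the law of a centered Gaussian vector with covariance Σ (defined as the law of A·G for any matrix A with AAᵀ = Σ and G a standard Gaussian vector). Suppose that for every pair in Ψ, (μᵢ − μⱼ)ᵀ (Σ₀ + Σ)⁻¹ (μᵢ − μⱼ) ≤ (ε/c)². Then the additive-noise mechanism with noise ζ satisfies (ε, δ)-distribution privacy with respect to Ψ: for every pair in Ψ and every measurable S ⊆ ℝ^m, (N(μᵢ, Σ₀) ∗ ζ)(S) ≤ e^ε · (N(μⱼ, Σ₀) ∗ ζ)(S) + δ. -/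

import Mathlib

open MeasureTheory ProbabilityTheory

/-- Convolution of two measures on `ℝ^m`: the law of `X + Z` with `X ∼ μ`, `Z ∼ ν` independent. -/
noncomputable def mconv {m : ℕ} (μ ν : Measure (Fin m → ℝ)) : Measure (Fin m → ℝ) :=
  (μ.prod ν).map (fun p => p.1 + p.2)

/-- The Euclidean (`L²`) norm on `ℝ^m`. -/
noncomputable def l2norm {m : ℕ} (x : Fin m → ℝ) : ℝ := Real.sqrt (∑ k, (x k) ^ 2)

/-- The standard Gaussian measure on `ℝ^m`: `m` i.i.d. standard normal coordinates. -/
noncomputable def stdGaussPi (m : ℕ) : Measure (Fin m → ℝ) :=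
  Measure.pi fun _ : Fin m => gaussianReal 0 1

/-- The multivariate Gaussian measure `N(μ, A Aᵀ)` on `ℝ^m`, defined as the law of
`μ + A·G` where `G` is a standard Gaussian vector. -/
noncomputable def gaussN {m : ℕ} (μ : Fin m → ℝ) (A : Matrix (Fin m) (Fin m) ℝ) :
    Measure (Fin m → ℝ) :=
  (stdGaussPi m).map (fun g => μ + A.mulVec g)

namespace GaussAux

open Real ENNReal Matrix

/-- 1D shift density. -/
noncomputable def g1 (a x : ℝ) : ℝ≥0∞ := ENNReal.ofReal (Real.exp (a * x - a * a / 2))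

lemma measurable_g1 (a : ℝ) : Measurable (g1 a) :=
  (Real.measurable_exp.comp ((measurable_id.const_mul a).sub measurable_const)).ennreal_ofReal

lemma gaussianReal_shift (a : ℝ) :
    gaussianReal a 1 = (gaussianReal 0 1).withDensity (g1 a) := by
  rw [gaussianReal_of_var_ne_zero a one_ne_zero, gaussianReal_of_var_ne_zero 0 one_ne_zero,
    ← withDensity_mul _ (measurable_gaussianPDF 0 1) (measurable_g1 a)]
  congr 1
  funext x
  simp only [Pi.mul_apply, gaussianPDF, g1]
  rw [← ENNReal.ofReal_mul (gaussianPDFReal_nonneg 0 1 x)]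
  congr 1
  simp only [gaussianPDFReal, NNReal.coe_one, mul_one, sub_zero]
  rw [mul_assoc, ← Real.exp_add]
  congr 1
  ring

lemma lintegral_pi_prod : ∀ {n : ℕ} (μ : Fin n → Measure ℝ), (∀ i, SigmaFinite (μ i)) →
    ∀ (f : Fin n → ℝ → ℝ≥0∞), (∀ i, Measurable (f i)) →
    ∫⁻ x, ∏ i, f i (x i) ∂Measure.pi μ = ∏ i, ∫⁻ x, f i x ∂μ i := by
  intro n
  induction n with
  | zero => intro μ _ f _; simp
  | succ n ih =>
    intro μ hμ f hf
    haveI := hμ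
    have hmp := measurePreserving_piFinSuccAbove μ 0
    have hmeas2 : Measurable (fun y : Fin n → ℝ => ∏ j, f (Fin.succ j) (y j)) :=
      Finset.measurable_prod _ fun j _ => (hf j.succ).comp (measurable_pi_apply j)
    have hF : Measurable (fun p : ℝ × (Fin n → ℝ) => f 0 p.1 * ∏ j, f (Fin.succ j) (p.2 j)) :=
      ((hf 0).comp measurable_fst).mul (hmeas2.comp measurable_snd)
    calc ∫⁻ x, ∏ i, f i (x i) ∂Measure.pi μ
        = ∫⁻ x, (fun p : ℝ × (Fin n → ℝ) => f 0 p.1 * ∏ j, f (Fin.succ j) (p.2 j))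
            (MeasurableEquiv.piFinSuccAbove (fun _ => ℝ) 0 x) ∂Measure.pi μ := by
          congr 1; funext x
          simp [MeasurableEquiv.piFinSuccAbove_apply, Fin.prod_univ_succ, Fin.zero_succAbove,
            Fin.tail]
      _ = ∫⁻ p, f 0 p.1 * ∏ j, f (Fin.succ j) (p.2 j)
            ∂((μ 0).prod (Measure.pi fun j => μ (Fin.succAbove 0 j))) := hmp.lintegral_comp hF
      _ = (∫⁻ x, f 0 x ∂μ 0) * ∏ j, ∫⁻ x, f (Fin.succ j) x ∂μ (Fin.succ j) := by
          rw [lintegral_prod_mul ((hf 0).aemeasurable) hmeas2.aemeasurable]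
          congr 1
          have := ih (fun j => μ (Fin.succAbove 0 j)) (fun j => hμ _)
            (fun j => f (Fin.succ j)) (fun j => hf _)
          simpa [Fin.zero_succAbove] using this
      _ = ∏ i, ∫⁻ x, f i x ∂μ i := by rw [Fin.prod_univ_succ]

variable {m : ℕ}

instance : IsProbabilityMeasure (stdGaussPi m) := by
  unfold stdGaussPi; infer_instance

/-- The shift density on `ℝ^m`. -/
noncomputable def gV (w x : Fin m → ℝ) : ℝ≥0∞ :=
  ENNReal.ofReal (Real.exp (w ⬝ᵥ x - w ⬝ᵥ w / 2))

lemma measurable_dotProd (w : Fin m → ℝ) : Measurable (fun x : Fin m → ℝ => w ⬝ᵥ x) := by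
  unfold dotProduct
  exact Finset.measurable_sum _ fun i _ => (measurable_pi_apply (X := fun _ : Fin m => ℝ) i).const_mul (w i)

lemma measurable_gV (w : Fin m → ℝ) : Measurable (gV w) :=
  (Real.measurable_exp.comp ((measurable_dotProd w).sub measurable_const)).ennreal_ofReal

lemma stdGaussPi_map_shift (w : Fin m → ℝ) :
    (stdGaussPi m).map (· + w) = (stdGaussPi m).withDensity (gV w) := by
  have h1 : (stdGaussPi m).map (· + w) = Measure.pi (fun i => gaussianReal (w i) 1) := by
    have hmp := measurePreserving_pi (fun _ : Fin m => gaussianReal 0 1)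
      (fun i => gaussianReal (w i) 1) (f := fun i t => t + w i)
      (fun i => ⟨measurable_add_const _, by rw [gaussianReal_map_add_const]; simp⟩)
    exact hmp.map_eq
  rw [h1]
  refine Measure.pi_eq fun s hs => ?_
  rw [withDensity_apply _ (MeasurableSet.univ_pi hs),
    ← lintegral_indicator (MeasurableSet.univ_pi hs) _]
  have hfun : ∀ x : Fin m → ℝ, Set.indicator (Set.pi Set.univ s) (gV w) x
      = ∏ i, Set.indicator (s i) (g1 (w i)) (x i) := by
    intro x
    by_cases hx : x ∈ Set.pi Set.univ s
    · rw [Set.indicator_of_mem hx]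
      have hxs : ∀ i, x i ∈ s i := fun i => hx i (Set.mem_univ i)
      have : ∀ i, Set.indicator (s i) (g1 (w i)) (x i) = g1 (w i) (x i) := fun i =>
        Set.indicator_of_mem (hxs i) _
      simp only [this]
      unfold gV g1
      rw [← ENNReal.ofReal_prod_of_nonneg (fun i _ => (Real.exp_pos _).le), ← Real.exp_sum]
      congr 2
      simp [dotProduct, Finset.sum_sub_distrib, Finset.sum_div]
    · rw [Set.indicator_of_notMem hx]
      rw [Set.mem_univ_pi] at hx
      push_neg at hx
      obtain ⟨i, hi⟩ := hx
      exact (Finset.prod_eq_zero (Finset.mem_univ i)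
        (by rw [Set.indicator_of_notMem hi])).symm
  simp only [hfun]
  rw [stdGaussPi, lintegral_pi_prod _ (fun _ => inferInstance) _
    (fun i => (measurable_g1 (w i)).indicator (hs i))]
  congr 1
  funext i
  rw [lintegral_indicator (hs i) _, ← withDensity_apply _ (hs i), ← gaussianReal_shift]


variable {m : ℕ}

abbrev P (m : ℕ) := (Fin m → ℝ) × (Fin m → ℝ)

noncomputable def gam2 (m : ℕ) : Measure (P m) := (stdGaussPi m).prod (stdGaussPi m)

instance : IsProbabilityMeasure (gam2 m) := by unfold gam2; infer_instance

/-- inner product on the product space -/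
def ip (w x : P m) : ℝ := w.1 ⬝ᵥ x.1 + w.2 ⬝ᵥ x.2

lemma measurable_ip (w : P m) : Measurable (fun x : P m => ip w x) :=
  ((measurable_dotProd w.1).comp measurable_fst).add
    ((measurable_dotProd w.2).comp measurable_snd)

lemma ip_add (w x y : P m) : ip w (x + y) = ip w x + ip w y := by
  unfold ip
  simp [dotProduct_add]
  ring

lemma ip_self_nonneg (w : P m) : 0 ≤ ip w w :=
  add_nonneg (Finset.sum_nonneg fun i _ => mul_self_nonneg _)
    (Finset.sum_nonneg fun i _ => mul_self_nonneg _)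

lemma ip_smul_right (a : ℝ) (w x : P m) : ip w (a • x) = a * ip w x := by
  unfold ip
  simp [dotProduct_smul, smul_eq_mul]
  ring

lemma ip_smul_left (a : ℝ) (w x : P m) : ip (a • w) x = a * ip w x := by
  unfold ip
  simp [smul_dotProduct, smul_eq_mul]
  ring

noncomputable def gP (w x : P m) : ℝ≥0∞ := ENNReal.ofReal (Real.exp (ip w x - ip w w / 2))

lemma measurable_gP (w : P m) : Measurable (gP w) :=
  (Real.measurable_exp.comp ((measurable_ip w).sub measurable_const)).ennreal_ofReal

lemma gP_eq (w x : P m) : gP w x = gV w.1 x.1 * gV w.2 x.2 := by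
  unfold gP gV ip
  rw [← ENNReal.ofReal_mul (Real.exp_pos _).le, ← Real.exp_add]
  congr 2
  ring

lemma gam2_map_shift (w : P m) :
    (gam2 m).map (· + w) = (gam2 m).withDensity (gP w) := by
  haveI h1 : IsProbabilityMeasure ((stdGaussPi m).withDensity (gV w.1)) := by
    rw [← stdGaussPi_map_shift]
    exact Measure.isProbabilityMeasure_map (measurable_add_const _).aemeasurable
  haveI h2 : IsProbabilityMeasure ((stdGaussPi m).withDensity (gV w.2)) := by
    rw [← stdGaussPi_map_shift]
    exact Measure.isProbabilityMeasure_map (measurable_add_const _).aemeasurable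
  have hadd : (fun p : P m => p + w) = Prod.map (· + w.1) (· + w.2) := rfl
  unfold gam2
  rw [hadd, ← Measure.map_prod_map _ _ (measurable_add_const _) (measurable_add_const _),
    stdGaussPi_map_shift, stdGaussPi_map_shift]
  refine Measure.prod_eq fun s t hs ht => ?_
  rw [withDensity_apply _ (hs.prod ht), ← Measure.prod_restrict]
  have heq : ∀ p : P m, gP w p = gV w.1 p.1 * gV w.2 p.2 := gP_eq w
  simp only [heq]
  rw [lintegral_prod_mul (measurable_gV w.1).aemeasurable (measurable_gV w.2).aemeasurable,
    ← withDensity_apply _ hs, ← withDensity_apply _ ht]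

lemma gam2_shift_apply (w : P m) {E : Set (P m)} (hE : MeasurableSet E) :
    gam2 m ((· + w) ⁻¹' E) = ∫⁻ x in E, gP w x ∂gam2 m := by
  rw [← Measure.map_apply (measurable_add_const w) hE, gam2_map_shift,
    withDensity_apply _ hE]

lemma stdGaussPi_map_neg : (stdGaussPi m).map (fun x => -x) = stdGaussPi m := by
  have h1 : (gaussianReal 0 1).map (fun t : ℝ => -t) = gaussianReal 0 1 := by
    have h := gaussianReal_map_const_mul (μ := 0) (v := 1) (-1)
    have h2 : (fun t : ℝ => -t) = ((-1 : ℝ) * ·) := by funext t; simp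
    rw [h2, h]
    norm_num
  have hmp := measurePreserving_pi (fun _ : Fin m => gaussianReal 0 1)
    (fun _ : Fin m => gaussianReal 0 1) (f := fun _ t => -t)
    (fun i => ⟨measurable_neg, h1⟩)
  exact hmp.map_eq

lemma gam2_map_neg : (gam2 m).map (fun p => -p) = gam2 m := by
  have hadd : (fun p : P m => -p)
      = Prod.map (fun x : Fin m → ℝ => -x) (fun x : Fin m → ℝ => -x) := rfl
  unfold gam2
  rw [hadd, ← Measure.map_prod_map _ _ measurable_neg measurable_neg, stdGaussPi_map_neg]

lemma gam2_halfspace_le_half (w : P m) :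
    gam2 m {x : P m | 0 < ip w x} ≤ 1 / 2 := by
  set Pos := {x : P m | 0 < ip w x} with hPos_def
  set Neg := {x : P m | ip w x < 0} with hNeg_def
  have hPos : MeasurableSet Pos := measurableSet_lt measurable_const (measurable_ip w)
  have hNeg : MeasurableSet Neg := measurableSet_lt (measurable_ip w) measurable_const
  have hpre : (fun p : P m => -p) ⁻¹' Pos = Neg := by
    ext x
    have hnx : ip w (-x) = - ip w x := by unfold ip; simp [dotProduct_neg]; ring
    simp [hPos_def, hNeg_def, Set.mem_preimage, Set.mem_setOf_eq, hnx, neg_pos]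
  have hmapeq : gam2 m Pos = gam2 m Neg := by
    conv_lhs => rw [← gam2_map_neg]
    rw [Measure.map_apply measurable_neg hPos, hpre]
  have hdisj : Disjoint Pos Neg := by
    rw [Set.disjoint_left]
    intro x hx hx'
    simp only [hPos_def, Set.mem_setOf_eq] at hx
    simp only [hNeg_def, Set.mem_setOf_eq] at hx'
    linarith
  have hsum : gam2 m Pos + gam2 m Neg ≤ 1 := by
    rw [← measure_union hdisj hNeg]
    exact prob_le_one
  have h2le : 2 * gam2 m Pos ≤ 1 := by
    rw [two_mul]
    calc gam2 m Pos + gam2 m Pos = gam2 m Pos + gam2 m Neg := by rw [hmapeq]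
    _ ≤ 1 := hsum
  rw [ENNReal.le_div_iff_mul_le (Or.inl two_ne_zero) (Or.inl ENNReal.ofNat_ne_top), mul_comm]
  exact h2le
lemma ip_self_eq_zero {w : P m} (h : ip w w = 0) : w = 0 := by
  have h1 : (0:ℝ) ≤ w.1 ⬝ᵥ w.1 := Finset.sum_nonneg fun i _ => mul_self_nonneg _
  have h2 : (0:ℝ) ≤ w.2 ⬝ᵥ w.2 := Finset.sum_nonneg fun i _ => mul_self_nonneg _
  unfold ip at h
  have e1 : w.1 ⬝ᵥ w.1 = 0 := by linarith
  have e2 : w.2 ⬝ᵥ w.2 = 0 := by linarith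
  have := dotProduct_self_eq_zero.mp e1
  have := dotProduct_self_eq_zero.mp e2
  exact Prod.ext (by assumption) (by assumption)

lemma key_shift_privacy (ε δ c : ℝ) (hε : 0 < ε ∧ ε ≤ 1) (hδ : 0 < δ ∧ δ < 1)
    (hc : c = Real.sqrt (2 * Real.log (1.25 / δ))) (hc32 : 3 / 2 ≤ c)
    (w : P m) (hw : ip w w ≤ (ε / c) ^ 2) {E : Set (P m)} (hE : MeasurableSet E) :
    gam2 m ((· + w) ⁻¹' E) ≤ ENNReal.ofReal (Real.exp ε) * gam2 m E + ENNReal.ofReal δ := by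
  have hc0 : (0:ℝ) < c := lt_of_lt_of_le (by norm_num) hc32
  have hexp1 : (1:ℝ≥0∞) ≤ ENNReal.ofReal (Real.exp ε) := by
    rw [← ENNReal.ofReal_one]
    exact ENNReal.ofReal_le_ofReal (Real.one_le_exp hε.1.le)
  by_cases hw0 : w = 0
  · subst hw0
    have hEeq : ((· + (0 : P m)) ⁻¹' E) = E := by ext x; simp
    rw [hEeq]
    calc gam2 m E = 1 * gam2 m E := (one_mul _).symm
      _ ≤ ENNReal.ofReal (Real.exp ε) * gam2 m E := mul_le_mul_left hexp1 _
      _ ≤ _ := le_add_right le_rfl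
  · -- nondegenerate case
    set s := ip w w with hs_def
    have hs_pos : 0 < s := by
      rcases lt_or_eq_of_le (ip_self_nonneg w) with h | h
      · exact h
      · exact absurd (ip_self_eq_zero h.symm) hw0
    have hsc : s * c ^ 2 ≤ ε ^ 2 := by
      rw [div_pow] at hw
      exact (le_div_iff₀ (by positivity)).mp hw
    clear_value s
    set t := ε - s / 2 with ht_def
    clear_value t
    have hc2 : (9:ℝ)/4 ≤ c ^ 2 := by nlinarith
    have ht_pos : 0 < t := by
      rw [ht_def]
      nlinarith [hε.1, hε.2, hs_pos, hsc, hc2, mul_nonneg hs_pos.le (sub_nonneg.mpr hc2)]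
    have hkey : (c ^ 2 - 1) * s ≤ t ^ 2 := by
      rw [ht_def]
      nlinarith [hsc, mul_nonneg hs_pos.le (sub_nonneg.mpr hε.2), sq_nonneg s]
    -- numeric bound
    have hnum : Real.exp (-(t ^ 2 / (2 * s))) / 2 ≤ δ := by
      have hlognn : (0:ℝ) ≤ Real.log (1.25 / δ) :=
        Real.log_nonneg (by rw [le_div_iff₀ hδ.1]; linarith [hδ.2])
      have hc2eq : c ^ 2 = 2 * Real.log (1.25 / δ) := by
        rw [hc, Real.sq_sqrt (by linarith)]
      have h1 : (c ^ 2 - 1) / 2 ≤ t ^ 2 / (2 * s) := by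
        rw [div_le_div_iff₀ (by norm_num) (by linarith)]
        nlinarith [hkey, hs_pos]
      have h2 : Real.exp (-(t ^ 2 / (2 * s))) ≤ Real.exp ((1 - c ^ 2) / 2) :=
        Real.exp_le_exp.mpr (by linarith)
      have h3 : Real.exp ((1 - c ^ 2) / 2) = Real.exp (1 / 2) * (δ / 1.25) := by
        rw [show (1 - c ^ 2) / 2 = 1 / 2 + -(c ^ 2 / 2) by ring, Real.exp_add]
        congr 1
        rw [hc2eq, show -(2 * Real.log (1.25 / δ) / 2) = -Real.log (1.25 / δ) by ring,
          Real.exp_neg, Real.exp_log (div_pos (by norm_num) hδ.1), inv_div]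
      have he : Real.exp (1 / 2) ≤ 2.5 := by
        have h4 : Real.exp (1 / 2) ^ 2 = Real.exp 1 := by
          rw [sq, ← Real.exp_add]; norm_num
        nlinarith [Real.exp_pos (1 / 2 : ℝ), Real.exp_one_lt_d9]
      have h5 : Real.exp (1 / 2) * (δ / 1.25) ≤ 2.5 * (δ / 1.25) :=
        mul_le_mul_of_nonneg_right he (div_nonneg hδ.1.le (by norm_num))
      have h6 : (2.5 : ℝ) * (δ / 1.25) = 2 * δ := by ring
      linarith [h2, h3, h5, h6]
    -- measure part
    rw [gam2_shift_apply w hE]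
    set G : Set (P m) := {x : P m | ip w x ≤ ε + s / 2} with hG_def
    have hGmeas : MeasurableSet G := measurableSet_le (measurable_ip w) measurable_const
    have hsplit : ∫⁻ x in E, gP w x ∂gam2 m
        = (∫⁻ x in E ∩ G, gP w x ∂gam2 m) + ∫⁻ x in E ∩ Gᶜ, gP w x ∂gam2 m := by
      rw [← lintegral_union (hE.inter hGmeas.compl)
        (Set.disjoint_of_subset Set.inter_subset_right Set.inter_subset_right
          disjoint_compl_right), Set.inter_union_compl]
    have h1le : ∫⁻ x in E ∩ G, gP w x ∂gam2 m ≤ ENNReal.ofReal (Real.exp ε) * gam2 m E := by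
      have hb : ∀ x ∈ E ∩ G, gP w x ≤ ENNReal.ofReal (Real.exp ε) := by
        intro x hx
        have hxG : ip w x ≤ ε + s / 2 := hx.2
        exact ENNReal.ofReal_le_ofReal (Real.exp_le_exp.mpr (by rw [← hs_def]; linarith))
      calc ∫⁻ x in E ∩ G, gP w x ∂gam2 m
          ≤ ∫⁻ _ in E ∩ G, ENNReal.ofReal (Real.exp ε) ∂gam2 m :=
            setLIntegral_mono measurable_const hb
        _ = ENNReal.ofReal (Real.exp ε) * gam2 m (E ∩ G) := setLIntegral_const _ _
        _ ≤ _ := mul_le_mul_right (measure_mono Set.inter_subset_left) _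
    have h2le : ∫⁻ x in E ∩ Gᶜ, gP w x ∂gam2 m ≤ ENNReal.ofReal δ := by
      have hsub : ∫⁻ x in E ∩ Gᶜ, gP w x ∂gam2 m ≤ ∫⁻ x in Gᶜ, gP w x ∂gam2 m :=
        lintegral_mono_set Set.inter_subset_right
      have htail : ∫⁻ x in Gᶜ, gP w x ∂gam2 m = gam2 m ((· + w) ⁻¹' Gᶜ) :=
        (gam2_shift_apply w hGmeas.compl).symm
      have hset : ((· + w) ⁻¹' Gᶜ) = {x : P m | t < ip w x} := by
        ext x
        simp only [Set.mem_preimage, Set.mem_compl_iff, hG_def, Set.mem_setOf_eq, not_le,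
          ip_add, ← hs_def]
        constructor <;> intro h <;> [linarith; linarith]
      -- second shift
      set u : P m := (-(t / s)) • w with hu_def
      have hipwu : ip w u = -t := by
        rw [hu_def, ip_smul_right, ← hs_def]
        field_simp [hs_pos.ne']
      have hipuu : ip u u = t ^ 2 / s := by
        rw [hu_def, ip_smul_left, ip_smul_right, ← hs_def]
        field_simp [hs_pos.ne']
      have hPos : MeasurableSet {x : P m | 0 < ip w x} :=
        measurableSet_lt measurable_const (measurable_ip w)
      have htail2 : {x : P m | t < ip w x} = (· + u) ⁻¹' {x : P m | 0 < ip w x} := by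
        ext x
        simp only [Set.mem_preimage, Set.mem_setOf_eq, ip_add, hipwu]
        constructor <;> intro h <;> linarith
      have hb2 : ∀ x ∈ {x : P m | 0 < ip w x},
          gP u x ≤ ENNReal.ofReal (Real.exp (-(t ^ 2 / (2 * s)))) := by
        intro x hx
        have hx0 : 0 < ip w x := hx
        have hux : ip u x = -(t / s) * ip w x := by rw [hu_def, ip_smul_left]
        have hneg : ip u x ≤ 0 := by
          rw [hux]
          apply mul_nonpos_of_nonpos_of_nonneg
          · exact neg_nonpos_of_nonneg (div_nonneg ht_pos.le hs_pos.le)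
          · exact hx0.le
        apply ENNReal.ofReal_le_ofReal
        apply Real.exp_le_exp.mpr
        rw [hipuu]
        have : t ^ 2 / s / 2 = t ^ 2 / (2 * s) := by ring
        linarith [hneg, this ▸ le_refl (t ^ 2 / s / 2)]
      calc ∫⁻ x in E ∩ Gᶜ, gP w x ∂gam2 m
          ≤ ∫⁻ x in Gᶜ, gP w x ∂gam2 m := hsub
        _ = gam2 m {x : P m | t < ip w x} := by rw [htail, hset]
        _ = gam2 m ((· + u) ⁻¹' {x : P m | 0 < ip w x}) := by rw [htail2]
        _ = ∫⁻ x in {x : P m | 0 < ip w x}, gP u x ∂gam2 m := gam2_shift_apply u hPos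
        _ ≤ ∫⁻ _ in {x : P m | 0 < ip w x},
              ENNReal.ofReal (Real.exp (-(t ^ 2 / (2 * s)))) ∂gam2 m :=
            setLIntegral_mono measurable_const hb2
        _ = ENNReal.ofReal (Real.exp (-(t ^ 2 / (2 * s)))) * gam2 m {x : P m | 0 < ip w x} :=
            setLIntegral_const _ _
        _ ≤ ENNReal.ofReal (Real.exp (-(t ^ 2 / (2 * s)))) * (1 / 2) :=
            mul_le_mul_right (gam2_halfspace_le_half w) _
        _ ≤ ENNReal.ofReal δ := by
            rw [show (1:ℝ≥0∞)/2 = ENNReal.ofReal (1/2) by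
              rw [ENNReal.ofReal_div_of_pos (by norm_num)]; norm_num,
              ← ENNReal.ofReal_mul (Real.exp_pos _).le]
            exact ENNReal.ofReal_le_ofReal (by linarith [hnum])
    rw [hsplit]
    exact add_le_add h1le h2le
lemma measurable_mulVec (A : Matrix (Fin m) (Fin m) ℝ) :
    Measurable (fun v : Fin m → ℝ => A.mulVec v) :=
  measurable_pi_iff.mpr fun i => by
    simpa [Matrix.mulVec, dotProduct] using
      Finset.measurable_sum Finset.univ fun j _ => (measurable_pi_apply (X := fun _ : Fin m => ℝ) j).const_mul (A i j)

lemma dot_self_transpose (A : Matrix (Fin m) (Fin m) ℝ) (v : Fin m → ℝ) :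
    (A.transpose.mulVec v) ⬝ᵥ (A.transpose.mulVec v) = v ⬝ᵥ ((A * A.transpose).mulVec v) := by
  rw [Matrix.dotProduct_mulVec, Matrix.vecMul_transpose, Matrix.mulVec_mulVec,
    dotProduct_comm]

lemma mconv_gaussN_eq (μv : Fin m → ℝ) (A B : Matrix (Fin m) (Fin m) ℝ) :
    mconv (gaussN μv A) (gaussN 0 B)
      = (gam2 m).map (fun q : P m => (A.mulVec q.1 + B.mulVec q.2) + μv) := by
  unfold mconv gaussN gam2
  rw [Measure.map_prod_map _ _ ((measurable_mulVec A).const_add μv)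
    ((measurable_mulVec B).const_add 0),
    Measure.map_map (g := fun p : (Fin m → ℝ) × (Fin m → ℝ) => p.1 + p.2) (measurable_fst.add measurable_snd)
      (((measurable_mulVec A).const_add μv).prodMap ((measurable_mulVec B).const_add 0))]
  congr 1
  funext q
  show (μv + A.mulVec q.1) + (0 + B.mulVec q.2) = (A.mulVec q.1 + B.mulVec q.2) + μv
  rw [zero_add]
  abel

end GaussAux

open GaussAux Matrix in
/-- **Gaussian noise with adversarial uncertainty** (Corollary A.1): if every pair in
`Ψ` is of the form `(N(μᵢ, Σ₀), N(μⱼ, Σ₀))` with common positive definite covariance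
`Σ₀` satisfying `(μᵢ − μⱼ)ᵀ (Σ₀ + Σ)⁻¹ (μᵢ − μⱼ) ≤ (ε/c)²`, where
`c = √(2 ln(1.25/δ))`, then adding noise `N(0, Σ)` (the law of `B·G` with `BBᵀ = Σ`)
gives `(ε, δ)`-distribution privacy w.r.t. `Ψ`. -/
theorem gaussian_noise_adversarial_uncertainty
    (m : ℕ) (hm : 1 ≤ m)
    (ε δ c : ℝ) (hε : 0 < ε ∧ ε ≤ 1) (hδ : 0 < δ ∧ δ < 1)
    (hc : c = Real.sqrt (2 * Real.log (1.25 / δ))) (hc32 : 3 / 2 ≤ c)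
    (Sig B : Matrix (Fin m) (Fin m) ℝ)
    (hSig : Sig.PosSemidef) (hB : B * B.transpose = Sig)
    (Ψ : Set (Measure (Fin m → ℝ) × Measure (Fin m → ℝ)))
    (hΨ : ∀ p ∈ Ψ, ∃ (μi μj : Fin m → ℝ) (Sig0 A : Matrix (Fin m) (Fin m) ℝ),
      Sig0.PosDef ∧ A * A.transpose = Sig0 ∧
      dotProduct (μi - μj) ((Sig0 + Sig)⁻¹.mulVec (μi - μj)) ≤ (ε / c) ^ 2 ∧
      p.1 = gaussN μi A ∧ p.2 = gaussN μj A) :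
    ∀ p ∈ Ψ, ∀ S : Set (Fin m → ℝ), MeasurableSet S →
      mconv p.1 (gaussN 0 B) S
        ≤ ENNReal.ofReal (Real.exp ε) * mconv p.2 (gaussN 0 B) S
          + ENNReal.ofReal δ := by
  intro p hp S hS
  obtain ⟨μi, μj, Sig0, A, hposd, hA, hmah, hp1, hp2⟩ := hΨ p hp
  rw [hp1, hp2, mconv_gaussN_eq, mconv_gaussN_eq]
  set L : P m → (Fin m → ℝ) := fun q => A.mulVec q.1 + B.mulVec q.2 with hL
  have hLmeas : Measurable L :=
    ((measurable_mulVec A).comp measurable_fst).add ((measurable_mulVec B).comp measurable_snd)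
  have hfi : Measurable (fun q : P m => L q + μi) := hLmeas.add_const _
  have hfj : Measurable (fun q : P m => L q + μj) := hLmeas.add_const _
  rw [Measure.map_apply hfi hS, Measure.map_apply hfj hS]
  have hM : (Sig0 + Sig).PosDef := hposd.add_posSemidef hSig
  have hMdet : IsUnit (Sig0 + Sig).det := isUnit_iff_ne_zero.mpr hM.det_pos.ne'
  set d : Fin m → ℝ := μi - μj with hd
  set u0 : Fin m → ℝ := (Sig0 + Sig)⁻¹.mulVec d with hu0
  set w : P m := (A.transpose.mulVec u0, B.transpose.mulVec u0) with hw_def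
  have hMu0 : (Sig0 + Sig).mulVec u0 = d := by
    rw [hu0, Matrix.mulVec_mulVec, Matrix.mul_nonsing_inv _ hMdet, Matrix.one_mulVec]
  have hLw : L w = d := by
    show A.mulVec (A.transpose.mulVec u0) + B.mulVec (B.transpose.mulVec u0) = d
    rw [Matrix.mulVec_mulVec u0 A A.transpose, Matrix.mulVec_mulVec u0 B B.transpose,
      ← Matrix.add_mulVec, hA, hB, hMu0]
  have hipw : ip w w ≤ (ε / c) ^ 2 := by
    have h1 : ip w w = u0 ⬝ᵥ ((A * A.transpose).mulVec u0) + u0 ⬝ᵥ ((B * B.transpose).mulVec u0) := by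
      show (A.transpose.mulVec u0) ⬝ᵥ (A.transpose.mulVec u0)
          + (B.transpose.mulVec u0) ⬝ᵥ (B.transpose.mulVec u0) = _
      rw [dot_self_transpose, dot_self_transpose]
    rw [h1, hA, hB, ← dotProduct_add, ← Matrix.add_mulVec, hMu0, dotProduct_comm]
    exact hmah
  have hpre : (fun q : P m => L q + μi) ⁻¹' S
      = (· + w) ⁻¹' ((fun q : P m => L q + μj) ⁻¹' S) := by
    ext q
    simp only [Set.mem_preimage]
    have hLadd : L (q + w) = L q + L w := by
      show A.mulVec (q.1 + w.1) + B.mulVec (q.2 + w.2) = _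
      rw [Matrix.mulVec_add, Matrix.mulVec_add]
      show _ = (A.mulVec q.1 + B.mulVec q.2) + (A.mulVec w.1 + B.mulVec w.2)
      abel
    have heq : L (q + w) + μj = L q + μi := by
      rw [hLadd, hLw, hd]
      abel
    rw [heq]
  rw [hpre]
  exact key_shift_privacy ε δ c hε hδ hc hc32 w hipw (hfj hS)
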